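/- For w a cyclically reduced word that is not a proper power, with Γ̃_w its cycle graph and Υ its pair-graph: for every connected component C of Υ, all pairs {v_i, v_j} belonging to C generate the same realizable quotient graph of Γ̃_w; hence the map f from components of Υ to type-A realizable quotient graphs of characteristic 2 is well defined and surjective. -/

import Mathlib

/-- A letter `g_i^{±1}` of the alphabet `Σ_k`. -/
abbrev Letter (k : ℕ) := Fin k × Bool

/-- The inverse letter: `(g_i^{α})⁻¹ = g_i^{-α}`. -/
def Letter.inv {k : ℕ} (x : Letter k) : Letter k := (x.1, !x.2)

/-- `w` is cyclically reduced: no two cyclically consecutive letters are mutually inverse. -/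
def CyclicallyReduced {k : ℕ} (w : List (Letter k)) : Prop :=
  ∀ i : Fin w.length,
    w.get ⟨((i : ℕ) + 1) % w.length, Nat.mod_lt _ i.pos⟩ ≠ Letter.inv (w.get i)

/-- The element of the free group `F_k` represented by a word over `Σ_k`. -/
def toFree {k : ℕ} (w : List (Letter k)) : FreeGroup (Fin k) :=
  (w.map fun x => if x.2 then FreeGroup.of x.1 else (FreeGroup.of x.1)⁻¹).prod

/-- The cyclic successor of a vertex of the cycle graph `Γ̃_w` (on `|w|` vertices). -/
def nxt {k : ℕ} {w : List (Letter k)} (h : Fin w.length) : Fin w.length :=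
  ⟨((h : ℕ) + 1) % w.length, Nat.mod_lt _ h.pos⟩

/-- The origin of the `h`-th edge of `Γ̃_w` (the edge joins `v_h` and `v_{h+1}` and is
directed according to the sign of the `h`-th letter of `w`). -/
def org {k : ℕ} (w : List (Letter k)) (h : Fin w.length) : Fin w.length :=
  if (w.get h).2 then h else nxt h

/-- The terminus of the `h`-th edge of `Γ̃_w`. -/
def ter {k : ℕ} (w : List (Letter k)) (h : Fin w.length) : Fin w.length :=
  if (w.get h).2 then nxt h else h

/-- The pair-graph `Υ` of `Γ̃_w`: its vertices are the unordered pairs of distinct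
vertices of `Γ̃_w`, and for every pair of distinct equally-labeled edges `ε₁, ε₂` of
`Γ̃_w` there is an edge joining `{origin ε₁, origin ε₂}` and `{terminus ε₁, terminus ε₂}`. -/
def Upsilon {k : ℕ} (w : List (Letter k)) :
    SimpleGraph {p : Sym2 (Fin w.length) // ¬ p.IsDiag} where
  Adj P Q := P ≠ Q ∧ ∃ h h' : Fin w.length, h ≠ h' ∧ (w.get h).1 = (w.get h').1 ∧
    ((P.1 = s(org w h, org w h') ∧ Q.1 = s(ter w h, ter w h')) ∨
     (Q.1 = s(org w h, org w h') ∧ P.1 = s(ter w h, ter w h')))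
  symm := by
    constructor
    rintro P Q ⟨hne, h, h', hhh, hl, hc⟩
    exact ⟨hne.symm, h, h', hhh, hl, hc.symm⟩
  loopless := by constructor; rintro P ⟨hne, -⟩; exact hne rfl

/-- The number of `j`-labeled edges of `Γ̃_w`. -/
def labelCount {k : ℕ} (w : List (Letter k)) (j : Fin k) : ℕ :=
  (Finset.univ.filter fun h : Fin w.length => (w.get h).1 = j).card

/-- A quotient (partition) of the vertices of the cycle `Γ̃_w` is realizable if no two
equally-labeled edges share an origin or a terminus in the quotient. -/
def FoldedC {k : ℕ} (w : List (Letter k)) (S : Setoid (Fin w.length)) : Prop :=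
  ∀ h h' : Fin w.length, (w.get h).1 = (w.get h').1 →
    (S.r (org w h) (org w h') ↔ S.r (ter w h) (ter w h'))

/-- The realizable quotient of `Γ̃_w` generated by merging the pair `{v_i, v_j}`:
the finest realizable partition identifying `v_i` and `v_j`. -/
def genC {k : ℕ} (w : List (Letter k)) (i j : Fin w.length) : Setoid (Fin w.length) :=
  sInf {S | FoldedC w S ∧ S.r i j}

/-- For `w` cyclically reduced and not a proper power: any two pairs lying in the same
connected component of the pair-graph `Υ` generate the same realizable quotient of
`Γ̃_w`; hence the map `f` from components of `Υ` to the type-A realizable quotients of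
characteristic `2` (namely the quotients generated from `Γ̃_w` by a single pair) is
well defined, and it is surjective. -/

lemma genC_pair {k : ℕ} (w : List (Letter k)) {i j i' j' : Fin w.length}
    (h : s(i, j) = s(i', j')) : genC w i j = genC w i' j' := by
  rcases Sym2.eq_iff.mp h with ⟨rfl, rfl⟩ | ⟨rfl, rfl⟩
  · rfl
  · unfold genC
    congr 1
    ext S
    exact ⟨fun ⟨hf, hr⟩ => ⟨hf, S.symm' hr⟩, fun ⟨hf, hr⟩ => ⟨hf, S.symm' hr⟩⟩

lemma adj_gen {k : ℕ} (w : List (Letter k))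
    {P Q : {p : Sym2 (Fin w.length) // ¬ p.IsDiag}} (hadj : (Upsilon w).Adj P Q) :
    ∀ i j i' j' : Fin w.length, P.1 = s(i, j) → Q.1 = s(i', j') →
      genC w i j = genC w i' j' := by
  obtain ⟨-, h, h', -, hl, hc⟩ := hadj
  have key : genC w (org w h) (org w h') = genC w (ter w h) (ter w h') := by
    unfold genC
    congr 1
    ext S
    exact ⟨fun ⟨hf, hr⟩ => ⟨hf, (hf h h' hl).mp hr⟩,
           fun ⟨hf, hr⟩ => ⟨hf, (hf h h' hl).mpr hr⟩⟩
  intro i j i' j' hP hQ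
  rcases hc with ⟨hP2, hQ2⟩ | ⟨hQ2, hP2⟩
  · exact (genC_pair w (hP.symm.trans hP2)).trans
      (key.trans (genC_pair w (hQ2.symm.trans hQ)))
  · exact (genC_pair w (hP.symm.trans hP2)).trans
      (key.symm.trans (genC_pair w (hQ2.symm.trans hQ)))

theorem stmt12 {k : ℕ} (w : List (Letter k)) (hw : w ≠ [])
    (hcyc : CyclicallyReduced w)
    (hnp : ¬ ∃ (g : FreeGroup (Fin k)) (d : ℕ), 2 ≤ d ∧ toFree w = g ^ d) :
    (∀ P Q : {p : Sym2 (Fin w.length) // ¬ p.IsDiag}, (Upsilon w).Reachable P Q →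
      ∀ i j i' j' : Fin w.length, P.1 = s(i, j) → Q.1 = s(i', j') →
        genC w i j = genC w i' j') ∧
    (∀ S : Setoid (Fin w.length), (∃ i j, i ≠ j ∧ S = genC w i j) →
      ∃ P : {p : Sym2 (Fin w.length) // ¬ p.IsDiag},
        ∀ i j : Fin w.length, P.1 = s(i, j) → genC w i j = S) := by
  constructor
  · intro P Q hreach
    obtain ⟨p⟩ := hreach
    induction p with
    | nil =>
      intro i j i' j' hP hQ
      exact genC_pair w (hP.symm.trans hQ)
    | @cons P R Q hadj p ih =>
      intro i j i' j' hP hQ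
      obtain ⟨⟨a, b⟩, hab⟩ := Quot.exists_rep R.1
      exact (adj_gen w hadj i j a b hP hab.symm).trans (ih a b i' j' hab.symm hQ)
  · rintro S ⟨i, j, hij, rfl⟩
    refine ⟨⟨s(i, j), by simpa using hij⟩, ?_⟩
    intro i' j' hP
    exact genC_pair w (hP.symm : s(i', j') = s(i, j))
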